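/- Let (S, L) be a greedoid language and w : L → ℝ an objective function. Assume the following condition: whenever αx ∈ L satisfies w(αx) ≤ w(αy) for every y ∈ Γ(α), and γ = αzβ ∈ L is a basic word (for some letter z and word β), then there exists a basic word δ = αxε ∈ L with w(δ) ≤ w(γ). Then every output of the greedoid greedy algorithm is a basic word of minimum weight; precisely, if γ = x₁x₂⋯x_m ∈ L satisfies Γ(γ) = ∅ and, for every i ∈ {1,…,m}, writing α = x₁⋯x_{i−1}, one has w(αx_i) ≤ w(αy) for all y ∈ Γ(α), then γ is a basic word and w(γ) ≤ w(β) for every basic word β ∈ L. -/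

import Mathlib

/-- (Szeszlér, Theorem 6.) Let `(S, L)` be a greedoid language (the finite
ground set `S` is the finite type `α`) and `w : L → ℝ` an objective function. Assume:
whenever `a ++ [x] ∈ L` satisfies `w (a ++ [x]) ≤ w (a ++ [y])` for every continuation
`y ∈ Γ(a)`, and `a ++ z :: b ∈ L` is a basic word, then there exists a basic word
`a ++ x :: ε ∈ L` with `w (a ++ x :: ε) ≤ w (a ++ z :: b)`. Then every output of the
greedoid greedy algorithm is a basic word of minimum weight: if `γ ∈ L` has no
continuation and at every step `i` of `γ` the chosen letter minimizes `w` among all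
continuations, then `γ` is basic and `w γ ≤ w β` for every basic word `β ∈ L`. -/
theorem greedoid_greedy_algorithm_optimal
    {α : Type*} [Fintype α] [DecidableEq α]
    (L : Set (List α)) (w : List α → ℝ)
    -- `L` is a simple language: all words consist of pairwise distinct letters
    (hsimple : ∀ v ∈ L, List.Nodup v)
    -- (i) the empty word belongs to `L`
    (hempty : ([] : List α) ∈ L)
    -- (ii) `L` is closed under taking prefixes
    (hprefix : ∀ a b : List α, a ++ b ∈ L → a ∈ L)
    -- (iii) the exchange property
    (hexchange : ∀ a ∈ L, ∀ b ∈ L, b.length < a.length → ∃ x ∈ a, b ++ [x] ∈ L)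
    -- the greedy-optimality condition
    (hcond : ∀ (a : List α) (x : α), a ++ [x] ∈ L →
      (∀ y : α, y ∉ a → a ++ [y] ∈ L → w (a ++ [x]) ≤ w (a ++ [y])) →
      ∀ (z : α) (b : List α), a ++ z :: b ∈ L →
        (∀ β ∈ L, β.length ≤ (a ++ z :: b).length) →
        ∃ ε : List α, a ++ x :: ε ∈ L ∧
          (∀ β ∈ L, β.length ≤ (a ++ x :: ε).length) ∧
          w (a ++ x :: ε) ≤ w (a ++ z :: b))
    -- `γ` is a legal output of the greedy algorithm:
    (γ : List α) (hγ : γ ∈ L)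
    -- the algorithm stopped: `Γ(γ) = ∅`
    (hnocont : ∀ x : α, x ∉ γ → γ ++ [x] ∉ L)
    -- at every step, the chosen letter minimizes `w` among all continuations
    (hgreedy : ∀ i : Fin γ.length, ∀ y : α,
      y ∉ γ.take i.val → γ.take i.val ++ [y] ∈ L →
      w (γ.take i.val ++ [γ.get i]) ≤ w (γ.take i.val ++ [y])) :
    (∀ β ∈ L, β.length ≤ γ.length) ∧
    (∀ β ∈ L, (∀ β' ∈ L, β'.length ≤ β.length) → w γ ≤ w β) := by
  have hbasicγ : ∀ β ∈ L, β.length ≤ γ.length := by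
    intro β hβ
    by_contra h
    push_neg at h
    obtain ⟨x, hxβ, hx⟩ := hexchange β hβ γ hγ h
    have hnd := hsimple _ hx
    have hxnot : x ∉ γ := by
      intro hxγ
      have := List.disjoint_of_nodup_append hnd
      exact this hxγ (by simp)
    exact hnocont x hxnot hx
  refine ⟨hbasicγ, ?_⟩
  intro β hβ hβbasic
  have key : ∀ k, k ≤ γ.length → ∃ δ ∈ L, (∀ β' ∈ L, β'.length ≤ δ.length) ∧
      δ.take k = γ.take k ∧ w δ ≤ w β := by
    intro k
    induction k with
    | zero => intro _; exact ⟨β, hβ, hβbasic, by simp, le_refl _⟩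
    | succ k ih =>
      intro hk
      obtain ⟨δ, hδL, hδb, hδtake, hδw⟩ := ih (Nat.le_of_succ_le hk)
      have hkγ : k < γ.length := hk
      have hδlen : δ.length = γ.length := le_antisymm (hbasicγ δ hδL) (hδb γ hγ)
      set a := γ.take k with ha
      have hdrop : δ = a ++ δ.drop k := by
        nth_rewrite 1 [← List.take_append_drop k δ]
        rw [hδtake]
      have hkδ : k < δ.length := hδlen ▸ hkγ
      obtain ⟨z, b, hzb⟩ : ∃ z b, δ.drop k = z :: b := by
        cases h : δ.drop k with
        | nil =>
          exfalso
          have := List.drop_eq_nil_iff.mp h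
          omega
        | cons z b => exact ⟨z, b, rfl⟩
      set x := γ.get ⟨k, hkγ⟩ with hx
      have htcg : a ++ [x] = γ.take (k + 1) := by
        rw [hx, ha, List.get_eq_getElem, ← List.concat_eq_append]
        exact List.take_concat_get hkγ
      have haxL : a ++ [x] ∈ L := by
        have h1 : γ.take (k+1) ∈ L := by
          apply hprefix _ (γ.drop (k+1))
          rw [List.take_append_drop]; exact hγ
        rwa [← htcg] at h1
      have hmin : ∀ y, y ∉ a → a ++ [y] ∈ L → w (a ++ [x]) ≤ w (a ++ [y]) :=
        fun y hy hyL => hgreedy ⟨k, hkγ⟩ y hy hyL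
      have hδeq : δ = a ++ z :: b := by rw [hdrop, hzb]
      have hδ' : a ++ z :: b ∈ L := hδeq ▸ hδL
      have hδ'b : ∀ β' ∈ L, β'.length ≤ (a ++ z :: b).length := hδeq ▸ hδb
      obtain ⟨ε, hεL, hεb, hεw⟩ := hcond a x haxL hmin z b hδ' hδ'b
      refine ⟨a ++ x :: ε, hεL, hεb, ?_, le_trans hεw (hδeq ▸ hδw)⟩
      have hal : a.length = k := by
        rw [ha, List.length_take]; omega
      have h2 : (a ++ x :: ε).take (k+1) = a ++ [x] := by
        rw [List.take_append]
        simp [hal, List.take_of_length_le (by omega : a.length ≤ k+1)]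
      rw [h2, htcg]
  obtain ⟨δ, hδL, hδb, hδtake, hδw⟩ := key γ.length le_rfl
  have hδlen : δ.length = γ.length := le_antisymm (hbasicγ δ hδL) (hδb γ hγ)
  have hδγ : δ = γ := by
    have h1 : δ.take γ.length = δ := by rw [← hδlen, List.take_length]
    rw [← h1, hδtake, List.take_length]
  rw [← hδγ]; exact hδw
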